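/- Let 0 < p ≤ q < 1 and suppose that for all x ∈ [0,1], I_p(x) ≥ I_p(q) + (I_p'(q)/(2q))·(x² − q²), where I_p(x) = x log(x/p) + (1−x) log((1−x)/(1−p)). Then for every symmetric measurable W : [0,1]² → [0,1] with t(K₃, W) ≥ q³, one has ∫∫ I_p(W(x,y)) dx dy ≥ I_p(q). -/

import Mathlib

open MeasureTheory Real

noncomputable section

def I01 : Set ℝ := Set.Icc 0 1

/-- Triangle density of a kernel `W`. -/
def tK3 (W : ℝ → ℝ → ℝ) : ℝ :=
  ∫ x in I01, ∫ y in I01, ∫ z in I01, W x y * W x z * W y z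

/-- The relative entropy function `I_p`. -/
def Ip (p x : ℝ) : ℝ := x * Real.log (x / p) + (1 - x) * Real.log ((1 - x) / (1 - p))

/-- The derivative of `I_p`. -/
def Ip' (p q : ℝ) : ℝ := Real.log (q / p) - Real.log ((1 - q) / (1 - p))

namespace Stmt4Aux

instance prob01 : IsProbabilityMeasure (volume.restrict I01) :=
  ⟨by simp [I01, Real.volume_Icc]⟩

lemma int_const (r : ℝ) : ∫ _x in I01, r = r := by
  simp [measure_univ]

/-- A bounded measurable function is integrable w.r.t. a finite measure. -/
lemma integrable_of_bdd {α : Type*} [MeasurableSpace α] {ν : Measure α} [IsFiniteMeasure ν]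
    {f : α → ℝ} (hf : Measurable f) {C : ℝ} (h : ∀ x, |f x| ≤ C) : Integrable f ν :=
  (integrable_const C).mono' hf.aestronglyMeasurable
    (ae_of_all _ fun x => by simpa [Real.norm_eq_abs] using h x)

/-- Cauchy–Schwarz for `[0,1]`-valued measurable functions. -/
lemma cs {α : Type*} [MeasurableSpace α] (ν : Measure α) [IsFiniteMeasure ν] {f g : α → ℝ}
    (hf : Measurable f) (hg : Measurable g) (hf0 : ∀ x, 0 ≤ f x) (hf1 : ∀ x, f x ≤ 1)
    (hg0 : ∀ x, 0 ≤ g x) (hg1 : ∀ x, g x ≤ 1) :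
    ∫ x, f x * g x ∂ν ≤ Real.sqrt (∫ x, f x ^ 2 ∂ν) * Real.sqrt (∫ x, g x ^ 2 ∂ν) := by
  have hpq : (2 : ℝ).HolderConjugate 2 := Real.holderConjugate_iff.mpr ⟨one_lt_two, by norm_num⟩
  have hmf : MemLp f (ENNReal.ofReal 2) ν :=
    MemLp.of_bound hf.aestronglyMeasurable 1
      (ae_of_all _ fun x => by
        rw [Real.norm_eq_abs]; exact abs_le.mpr ⟨by linarith [hf0 x], hf1 x⟩)
  have hmg : MemLp g (ENNReal.ofReal 2) ν :=
    MemLp.of_bound hg.aestronglyMeasurable 1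
      (ae_of_all _ fun x => by
        rw [Real.norm_eq_abs]; exact abs_le.mpr ⟨by linarith [hg0 x], hg1 x⟩)
  have h := integral_mul_le_Lp_mul_Lq_of_nonneg hpq (ae_of_all _ hf0) (ae_of_all _ hg0) hmf hmg
  calc ∫ x, f x * g x ∂ν
      ≤ (∫ x, f x ^ (2 : ℝ) ∂ν) ^ (1 / (2 : ℝ)) * (∫ x, g x ^ (2 : ℝ) ∂ν) ^ (1 / (2 : ℝ)) := h
    _ = Real.sqrt (∫ x, f x ^ 2 ∂ν) * Real.sqrt (∫ x, g x ^ 2 ∂ν) := by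
        simp_rw [Real.rpow_two, ← Real.sqrt_eq_rpow]

/-- `Ip p` is continuous when `0 < p < 1`. -/
lemma Ip_continuous {p : ℝ} (hp : 0 < p) (hp1 : p < 1) : Continuous (Ip p) := by
  have h1p : (1 : ℝ) - p ≠ 0 := by linarith
  have key : Ip p = fun x => (x * Real.log x - x * Real.log p)
      + ((1 - x) * Real.log (1 - x) - (1 - x) * Real.log (1 - p)) := by
    funext x
    unfold Ip
    congr 1
    · rcases eq_or_ne x 0 with h | h
      · simp [h]
      · rw [Real.log_div h (ne_of_gt hp)]; ring
    · rcases eq_or_ne (1 - x) 0 with h | h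
      · simp [h]
      · rw [Real.log_div h h1p]; ring
  rw [key]
  have hc1 : Continuous fun x : ℝ => x * Real.log x := Real.continuous_mul_log
  have hc2 : Continuous fun x : ℝ => (1 - x) * Real.log (1 - x) :=
    Real.continuous_mul_log.comp (continuous_const.sub continuous_id)
  fun_prop

/-- Bound on set integrals over `I01`. -/
lemma abs_integral_le {f : ℝ → ℝ} {C : ℝ} (h : ∀ y, |f y| ≤ C) :
    |∫ y in I01, f y| ≤ C := by
  have h' := norm_integral_le_of_norm_le_const (μ := volume.restrict I01) (f := f) (C := C)
    (ae_of_all _ fun y => by rw [Real.norm_eq_abs]; exact h y)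
  simpa [Real.norm_eq_abs] using h'

/-- The degree-square function. -/
def aa (W : ℝ → ℝ → ℝ) (x : ℝ) : ℝ := ∫ z in I01, (W x z) ^ 2

/-- `∫∫ W²`. -/
def AA (W : ℝ → ℝ → ℝ) : ℝ := ∫ x in I01, aa W x

/-- The codegree function. -/
def GG (W : ℝ → ℝ → ℝ) (x y : ℝ) : ℝ := ∫ z in I01, W x z * W y z

end Stmt4Aux

open Stmt4Aux

set_option maxHeartbeats 2000000 in
theorem stmt_4 (p q : ℝ) (hp : 0 < p) (hpq : p ≤ q) (hq : q < 1)
    (htangent : ∀ x ∈ Set.Icc (0 : ℝ) 1,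
      Ip p x ≥ Ip p q + (Ip' p q / (2 * q)) * (x ^ 2 - q ^ 2))
    (W : ℝ → ℝ → ℝ)
    (hrange : ∀ x y, W x y ∈ Set.Icc (0 : ℝ) 1)
    (hsymm : ∀ x y, W x y = W y x)
    (hmeas : Measurable (Function.uncurry W))
    (ht : tK3 W ≥ q ^ 3) :
    (∫ x in I01, ∫ y in I01, Ip p (W x y)) ≥ Ip p q := by
  classical
  have hq0 : 0 < q := lt_of_lt_of_le hp hpq
  have hp1 : p < 1 := lt_of_le_of_lt hpq hq
  have hW0 : ∀ x y, 0 ≤ W x y := fun x y => (hrange x y).1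
  have hW1 : ∀ x y, W x y ≤ 1 := fun x y => (hrange x y).2
  have hc0 : 0 ≤ Ip' p q / (2 * q) := by
    apply div_nonneg _ (by positivity)
    have h1 : 0 ≤ Real.log (q / p) := Real.log_nonneg ((one_le_div hp).2 hpq)
    have h2 : Real.log ((1 - q) / (1 - p)) ≤ 0 :=
      Real.log_nonpos (div_nonneg (by linarith) (by linarith))
        ((div_le_one (by linarith)).2 (by linarith))
    unfold Ip'
    linarith
  set c : ℝ := Ip' p q / (2 * q) with hcdef
  -- measurability of slices
  have hWx : ∀ x, Measurable (W x) := fun x => hmeas.comp measurable_prodMk_left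
  have hmW2 : Measurable fun pr : ℝ × ℝ => (W pr.1 pr.2) ^ 2 := by
    have h : Measurable fun pr : ℝ × ℝ => W pr.1 pr.2 := hmeas
    exact h.pow_const 2
  have ha_meas : Measurable (aa W) :=
    (hmW2.stronglyMeasurable.integral_prod_right').measurable
  have ha0 : ∀ x, 0 ≤ aa W x := fun x => integral_nonneg fun z => by positivity
  have ha1 : ∀ x, aa W x ≤ 1 := by
    intro x
    calc aa W x ≤ ∫ _z in I01, (1 : ℝ) := by
          apply integral_mono
          · exact integrable_of_bdd ((hWx x).pow_const 2)
              (C := 1) (fun z => abs_le.mpr ⟨by nlinarith [hW0 x z, hW1 x z],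
                by nlinarith [hW0 x z, hW1 x z]⟩)
          · exact integrable_const 1
          · intro z; simp only; nlinarith [hW0 x z, hW1 x z]
      _ = 1 := int_const 1
  have hG_meas : Measurable fun pr : ℝ × ℝ => GG W pr.1 pr.2 := by
    have hg : Measurable fun t : (ℝ × ℝ) × ℝ => W t.1.1 t.2 * W t.1.2 t.2 :=
      (hmeas.comp ((measurable_fst.fst).prodMk measurable_snd)).mul
        (hmeas.comp ((measurable_fst.snd).prodMk measurable_snd))
    exact (hg.stronglyMeasurable.integral_prod_right').measurable
  have hG0 : ∀ x y, 0 ≤ GG W x y := fun x y =>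
    integral_nonneg fun z => mul_nonneg (hW0 x z) (hW0 y z)
  have hG1 : ∀ x y, GG W x y ≤ 1 := by
    intro x y
    calc GG W x y ≤ ∫ _z in I01, (1 : ℝ) := by
          apply integral_mono
          · exact integrable_of_bdd ((hWx x).mul (hWx y)) (C := 1)
              (fun z => abs_le.mpr ⟨by nlinarith [hW0 x z, hW0 y z, hW1 x z, hW1 y z],
                by nlinarith [hW0 x z, hW0 y z, hW1 x z, hW1 y z]⟩)
          · exact integrable_const 1
          · intro z; simp only
            nlinarith [hW0 x z, hW0 y z, hW1 x z, hW1 y z]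
      _ = 1 := int_const 1
  -- pointwise Cauchy-Schwarz : GG x y ≤ √(aa x) √(aa y)
  have hGa : ∀ x y, GG W x y ≤ Real.sqrt (aa W x) * Real.sqrt (aa W y) := fun x y =>
    cs (volume.restrict I01) (hWx x) (hWx y) (hW0 x) (hW1 x) (hW0 y) (hW1 y)
  -- Step 1 : tK3 W = iterated integral of W * GG
  have hStep1 : tK3 W = ∫ x in I01, ∫ y in I01, W x y * GG W x y := by
    unfold tK3 GG
    simp_rw [mul_assoc, integral_const_mul]
  -- move to the product measure
  have hWGint : Integrable (fun pr : ℝ × ℝ => W pr.1 pr.2 * GG W pr.1 pr.2)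
      ((volume.restrict I01).prod (volume.restrict I01)) :=
    integrable_of_bdd (hmeas.mul hG_meas) (C := 1)
      (fun pr => abs_le.mpr ⟨by nlinarith [hW0 pr.1 pr.2, hG0 pr.1 pr.2],
        by nlinarith [hW0 pr.1 pr.2, hW1 pr.1 pr.2, hG0 pr.1 pr.2, hG1 pr.1 pr.2]⟩)
  have hStep2 : tK3 W = ∫ pr, W pr.1 pr.2 * GG W pr.1 pr.2
      ∂((volume.restrict I01).prod (volume.restrict I01)) := by
    rw [hStep1]
    exact integral_integral hWGint
  -- Cauchy-Schwarz on the product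
  have hCS := cs ((volume.restrict I01).prod (volume.restrict I01))
    hmeas hG_meas (fun pr => hW0 pr.1 pr.2) (fun pr => hW1 pr.1 pr.2)
    (fun pr => hG0 pr.1 pr.2) (fun pr => hG1 pr.1 pr.2)
  -- identify ∫ W² with AA W
  have hW2int : Integrable (fun pr : ℝ × ℝ => (W pr.1 pr.2) ^ 2)
      ((volume.restrict I01).prod (volume.restrict I01)) :=
    integrable_of_bdd hmW2 (C := 1)
      (fun pr => abs_le.mpr ⟨by nlinarith [hW0 pr.1 pr.2],
        by nlinarith [hW0 pr.1 pr.2, hW1 pr.1 pr.2]⟩)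
  have hIW2 : (∫ pr, (W pr.1 pr.2) ^ 2
      ∂((volume.restrict I01).prod (volume.restrict I01))) = AA W := by
    unfold AA aa
    exact (integral_integral (f := fun x y => (W x y) ^ 2) hW2int).symm
  -- bound ∫ GG² by (AA W)²
  have hG2le : (∫ pr, (GG W pr.1 pr.2) ^ 2
      ∂((volume.restrict I01).prod (volume.restrict I01))) ≤ AA W * AA W := by
    have haa : (∫ pr : ℝ × ℝ, aa W pr.1 * aa W pr.2
        ∂((volume.restrict I01).prod (volume.restrict I01))) = AA W * AA W :=
      integral_prod_mul (aa W) (aa W)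
    rw [← haa]
    apply integral_mono
    · exact integrable_of_bdd (hG_meas.pow_const 2) (C := 1)
        (fun pr => abs_le.mpr ⟨by nlinarith [hG0 pr.1 pr.2],
          by nlinarith [hG0 pr.1 pr.2, hG1 pr.1 pr.2]⟩)
    · exact integrable_of_bdd ((ha_meas.comp measurable_fst).mul
        (ha_meas.comp measurable_snd)) (C := 1)
        (fun pr => abs_le.mpr ⟨by nlinarith [ha0 pr.1, ha0 pr.2],
          by nlinarith [ha0 pr.1, ha0 pr.2, ha1 pr.1, ha1 pr.2]⟩)
    · intro pr
      have h2 : (GG W pr.1 pr.2) ^ 2 ≤ (Real.sqrt (aa W pr.1) * Real.sqrt (aa W pr.2)) ^ 2 :=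
        pow_le_pow_left₀ (hG0 pr.1 pr.2) (hGa pr.1 pr.2) 2
      calc (GG W pr.1 pr.2) ^ 2
          ≤ (Real.sqrt (aa W pr.1) * Real.sqrt (aa W pr.2)) ^ 2 := h2
        _ = aa W pr.1 * aa W pr.2 := by
            rw [mul_pow, Real.sq_sqrt (ha0 pr.1), Real.sq_sqrt (ha0 pr.2)]
  have hA0 : 0 ≤ AA W := integral_nonneg fun x => ha0 x
  -- conclude AA W ≥ q²
  have hqA : q ^ 2 ≤ AA W := by
    have hup : tK3 W ≤ Real.sqrt (AA W) * AA W := by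
      rw [hStep2]
      calc (∫ pr, W pr.1 pr.2 * GG W pr.1 pr.2
            ∂((volume.restrict I01).prod (volume.restrict I01)))
          ≤ Real.sqrt (∫ pr, (W pr.1 pr.2) ^ 2
              ∂((volume.restrict I01).prod (volume.restrict I01))) *
            Real.sqrt (∫ pr, (GG W pr.1 pr.2) ^ 2
              ∂((volume.restrict I01).prod (volume.restrict I01))) := hCS
        _ ≤ Real.sqrt (AA W) * Real.sqrt (AA W * AA W) := by
            rw [hIW2]
            exact mul_le_mul_of_nonneg_left (Real.sqrt_le_sqrt hG2le) (Real.sqrt_nonneg _)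
        _ = Real.sqrt (AA W) * AA W := by rw [Real.sqrt_mul_self hA0]
    by_contra hcon
    push_neg at hcon
    have hsA : Real.sqrt (AA W) < q := by
      have h := Real.sqrt_lt_sqrt hA0 hcon
      rwa [Real.sqrt_sq hq0.le] at h
    have hlt : Real.sqrt (AA W) * AA W < q * q ^ 2 :=
      mul_lt_mul'' hsA hcon (Real.sqrt_nonneg _) hA0
    nlinarith [ht]
  -- boundedness of Ip p on [0,1]
  have hIpc : Continuous (Ip p) := Ip_continuous hp hp1
  obtain ⟨C, hC⟩ : ∃ C, ∀ x ∈ Set.Icc (0 : ℝ) 1, |Ip p x| ≤ C := by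
    obtain ⟨C, hC⟩ := isCompact_Icc.exists_bound_of_continuousOn
      (hIpc.continuousOn (s := Set.Icc (0:ℝ) 1))
    exact ⟨C, fun x hx => by simpa [Real.norm_eq_abs] using hC x hx⟩
  -- inner inequality
  have hinner : ∀ x, Ip p q + c * (aa W x - q ^ 2) ≤ ∫ y in I01, Ip p (W x y) := by
    intro x
    have hintW2 : Integrable (fun y => (W x y) ^ 2) (volume.restrict I01) :=
      integrable_of_bdd ((hWx x).pow_const 2) (C := 1)
        (fun y => abs_le.mpr ⟨by nlinarith [hW0 x y], by nlinarith [hW0 x y, hW1 x y]⟩)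
    have hintL : Integrable (fun y => Ip p q + c * ((W x y) ^ 2 - q ^ 2))
        (volume.restrict I01) :=
      (integrable_const _).add ((hintW2.sub (integrable_const _)).const_mul c)
    have hintR : Integrable (fun y => Ip p (W x y)) (volume.restrict I01) :=
      integrable_of_bdd (hIpc.measurable.comp (hWx x)) (C := C)
        (fun y => hC _ (hrange x y))
    have hmono : (∫ y in I01, (Ip p q + c * ((W x y) ^ 2 - q ^ 2))) ≤
        ∫ y in I01, Ip p (W x y) := by
      apply integral_mono hintL hintR
      intro y
      exact htangent (W x y) (hrange x y)
    have hval : (∫ y in I01, (Ip p q + c * ((W x y) ^ 2 - q ^ 2))) =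
        Ip p q + c * (aa W x - q ^ 2) := by
      have e1 : (∫ y in I01, (Ip p q + c * ((W x y) ^ 2 - q ^ 2))) =
          (∫ _y in I01, Ip p q) + ∫ y in I01, c * ((W x y) ^ 2 - q ^ 2) :=
        integral_add (integrable_const (Ip p q))
          ((hintW2.sub (integrable_const (q ^ 2))).const_mul c)
      have e2 : (∫ y in I01, c * ((W x y) ^ 2 - q ^ 2)) =
          c * ∫ y in I01, ((W x y) ^ 2 - q ^ 2) := integral_const_mul c _
      have e3 : (∫ y in I01, ((W x y) ^ 2 - q ^ 2)) =
          (∫ y in I01, (W x y) ^ 2) - ∫ _y in I01, q ^ 2 :=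
        integral_sub hintW2 (integrable_const (q ^ 2))
      have e4 : (∫ _y in I01, Ip p q) = Ip p q := int_const _
      have e5 : (∫ _y in I01, (q ^ 2 : ℝ)) = q ^ 2 := int_const _
      have e6 : (∫ y in I01, (W x y) ^ 2) = aa W x := rfl
      rw [e1, e2, e3, e4, e5, e6]
    linarith [hmono, hval.le, hval.ge]
  -- outer inequality
  have ha_int : Integrable (aa W) (volume.restrict I01) :=
    integrable_of_bdd ha_meas (C := 1) (fun x => abs_le.mpr ⟨by linarith [ha0 x], ha1 x⟩)
  have houter : Ip p q + c * (AA W - q ^ 2) ≤ ∫ x in I01, ∫ y in I01, Ip p (W x y) := by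
    have hintL : Integrable (fun x => Ip p q + c * (aa W x - q ^ 2)) (volume.restrict I01) :=
      (integrable_const _).add ((ha_int.sub (integrable_const _)).const_mul c)
    have hIpWm : Measurable fun pr : ℝ × ℝ => Ip p (W pr.1 pr.2) :=
      hIpc.measurable.comp hmeas
    have hintR : Integrable (fun x => ∫ y in I01, Ip p (W x y)) (volume.restrict I01) := by
      refine integrable_of_bdd (C := |C|)
        (hIpWm.stronglyMeasurable.integral_prod_right').measurable (fun x => ?_)
      exact abs_integral_le fun y => le_trans (hC _ (hrange x y)) (le_abs_self C)
    have hmono : (∫ x in I01, (Ip p q + c * (aa W x - q ^ 2))) ≤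
        ∫ x in I01, ∫ y in I01, Ip p (W x y) :=
      integral_mono hintL hintR hinner
    have hval : (∫ x in I01, (Ip p q + c * (aa W x - q ^ 2))) =
        Ip p q + c * (AA W - q ^ 2) := by
      have e1 : (∫ x in I01, (Ip p q + c * (aa W x - q ^ 2))) =
          (∫ _x in I01, Ip p q) + ∫ x in I01, c * (aa W x - q ^ 2) :=
        integral_add (integrable_const (Ip p q))
          ((ha_int.sub (integrable_const (q ^ 2))).const_mul c)
      have e2 : (∫ x in I01, c * (aa W x - q ^ 2)) =
          c * ∫ x in I01, (aa W x - q ^ 2) := integral_const_mul c _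
      have e3 : (∫ x in I01, (aa W x - q ^ 2)) =
          (∫ x in I01, aa W x) - ∫ _x in I01, q ^ 2 :=
        integral_sub ha_int (integrable_const (q ^ 2))
      have e4 : (∫ _x in I01, Ip p q) = Ip p q := int_const _
      have e5 : (∫ _x in I01, (q ^ 2 : ℝ)) = q ^ 2 := int_const _
      have e6 : (∫ x in I01, aa W x) = AA W := rfl
      rw [e1, e2, e3, e4, e5, e6]
    linarith
  have hfin : 0 ≤ c * (AA W - q ^ 2) := mul_nonneg hc0 (by linarith)
  linarith
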